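/- Let R ⊆ S be a Prüfer extension of commutative rings with R local, and let I be a finitely generated ideal of R. Then I·S = S if and only if I = R·ρ for some strong divisor ρ of R that is invertible in S. -/

import Mathlib

universe u v

/-- A ring homomorphism is a *flat epimorphism* if it makes the target a flat module over
the source and it is an epimorphism in the category of commutative rings. -/
def RingHom.IsFlatEpi {A : Type u} {B : Type v} [CommRing A] [CommRing B] (f : A →+* B) : Prop :=
  (letI := f.toAlgebra; Module.Flat A B) ∧
    ∀ ⦃C : Type (max u v)⦄ [CommRing C], ∀ g h : B →+* C, g.comp f = h.comp f → g = h

/-- A ring homomorphism `f : A →+* B` is *Prüfer* if for every subring `T` of `B` containing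
the image of `f`, the induced map `A →+* T` is a flat epimorphism.  For an extension of rings
`R ⊆ S` (i.e. `R : Subring S`), the extension is Prüfer precisely when `R.subtype.IsPrufer`. -/
def RingHom.IsPrufer {A : Type u} {B : Type v} [CommRing A] [CommRing B] (f : A →+* B) : Prop :=
  ∀ (T : Subring B) (hT : f.range ≤ T),
    (f.codRestrict T fun a => hT (f.mem_range_self a)).IsFlatEpi

/-- The conductor ideal `(R :_R s) = {r ∈ R | r · s ∈ R}` of an element `s ∈ S`
with respect to a subring `R` of `S`. -/
def Subring.condIdeal {S : Type*} [CommRing S] (R : Subring S) (s : S) : Ideal R where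
  carrier := {r : R | (r : S) * s ∈ R}
  add_mem' := by
    intro a b ha hb
    have := R.add_mem ha hb
    simpa [add_mul] using this
  zero_mem' := by simpa using R.zero_mem
  smul_mem' := by
    intro c x hx
    have := R.mul_mem c.2 hx
    simpa [mul_assoc] using this

/-- A *strong divisor* of a (local) commutative ring `R` is a regular element `t`
such that the principal ideal `Rt` is comparable to every ideal of `R`. -/
def IsStrongDivisor {R : Type*} [CommRing R] (t : R) : Prop :=
  t ∈ nonZeroDivisors R ∧ ∀ I : Ideal R, I ≤ Ideal.span {t} ∨ Ideal.span {t} ≤ I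

open TensorProduct in
lemma RingHom.IsFlatEpi.map_maximalIdeal_or_surjective {A : Type u} {B : Type u} [CommRing A]
    [CommRing B] (f : A →+* B) (h : f.IsFlatEpi) [IsLocalRing A] :
    Ideal.map f (IsLocalRing.maximalIdeal A) = ⊤ ∨ Function.Surjective f := by
  by_cases hm : Ideal.map f (IsLocalRing.maximalIdeal A) = ⊤
  · exact Or.inl hm
  right
  letI : Algebra A B := f.toAlgebra
  haveI flat : Module.Flat A B := h.1
  haveI ff : Module.FaithfullyFlat A B := by
    refine ⟨fun m hmax hsm => hm ?_⟩
    rw [IsLocalRing.eq_maximalIdeal hmax] at hsm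
    rw [Ideal.smul_top_eq_map] at hsm
    have : Ideal.map (algebraMap A B) (IsLocalRing.maximalIdeal A) = ⊤ := by
      rw [eq_top_iff]
      intro x _
      rw [← Submodule.restrictScalars_mem A, hsm]; trivial
    rwa [show algebraMap A B = f from rfl] at this
  -- epi: t ⊗ 1 = 1 ⊗ t
  have key : ∀ t : B, (t ⊗ₜ[A] (1 : B) : B ⊗[A] B) = 1 ⊗ₜ[A] t := by
    have := h.2 (Algebra.TensorProduct.includeLeftRingHom (R := A) (A := B) (B := B))
      (Algebra.TensorProduct.includeRight (R := A) (A := B) (B := B)).toRingHom ?_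
    · intro t
      exact congrArg (fun g => g t) this
    · ext r
      show (f r) ⊗ₜ[A] (1:B) = 1 ⊗ₜ[A] (f r)
      have : f r = r • (1 : B) := by
        rw [Algebra.smul_def, mul_one]; rfl
      rw [this, TensorProduct.smul_tmul]
  -- coker
  set N := B ⧸ LinearMap.range (Algebra.linearMap A B) with hN
  have hzero : LinearMap.lTensor B (Submodule.mkQ (LinearMap.range (Algebra.linearMap A B))) = 0 := by
    apply TensorProduct.ext'
    intro b b'
    have h1 : (b ⊗ₜ[A] b' : B ⊗[A] B) = (b * b') ⊗ₜ[A] 1 := by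
      calc (b ⊗ₜ[A] b' : B ⊗[A] B) = (b ⊗ₜ[A] 1) * (1 ⊗ₜ[A] b') := by
            rw [Algebra.TensorProduct.tmul_mul_tmul]; ring_nf
        _ = (b ⊗ₜ[A] 1) * (b' ⊗ₜ[A] 1) := by rw [key b']
        _ = (b * b') ⊗ₜ[A] 1 := by rw [Algebra.TensorProduct.tmul_mul_tmul]; ring_nf
    rw [show (LinearMap.lTensor B (Submodule.mkQ _)) (b ⊗ₜ[A] b') =
        (LinearMap.lTensor B (Submodule.mkQ _)) ((b*b') ⊗ₜ[A] 1) from by rw [← h1]]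
    rw [LinearMap.lTensor_tmul]
    have : Submodule.mkQ (LinearMap.range (Algebra.linearMap A B)) 1 = 0 := by
      rw [Submodule.mkQ_apply, Submodule.Quotient.mk_eq_zero]
      exact ⟨1, by simp⟩
    rw [this, TensorProduct.tmul_zero]; rfl
  haveI : Subsingleton (B ⊗[A] N) := by
    constructor
    intro x y
    obtain ⟨x', hx⟩ := LinearMap.lTensor_surjective B
      (Submodule.mkQ_surjective (LinearMap.range (Algebra.linearMap A B))) x
    obtain ⟨y', hy⟩ := LinearMap.lTensor_surjective B
      (Submodule.mkQ_surjective (LinearMap.range (Algebra.linearMap A B))) y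
    rw [← hx, ← hy, hzero]; simp
  haveI : Subsingleton N := Module.FaithfullyFlat.lTensor_reflects_triviality A B N
  intro b
  have : Submodule.mkQ (LinearMap.range (Algebra.linearMap A B)) b = 0 := Subsingleton.elim _ _
  rw [Submodule.mkQ_apply, Submodule.Quotient.mk_eq_zero] at this
  obtain ⟨a, ha⟩ := this
  exact ⟨a, ha⟩

section Main

variable {S : Type u} [CommRing S] (R : Subring S) [IsLocalRing R]

lemma relation_of_not_mem (hR : R.subtype.IsPrufer) {s : S} (hs : s ∉ R) :
    ∃ (n : ℕ) (c : ℕ → R), (∀ j, c j ∈ IsLocalRing.maximalIdeal R) ∧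
      (1 : S) = ∑ j ∈ Finset.range (n+1), (c j : S) * s ^ j := by
  set T : Subring S := (Algebra.adjoin R ({s} : Set S)).toSubring with hT
  have hRT : R.subtype.range ≤ T := by
    rw [R.range_subtype]
    intro r hr
    exact (Algebra.adjoin (R := ↥R) ({s} : Set S)).algebraMap_mem ⟨r, hr⟩
  have hfe := hR T hRT
  set φ := R.subtype.codRestrict T (fun a => hRT (R.subtype.mem_range_self a)) with hφ
  rcases hfe.map_maximalIdeal_or_surjective φ with h1 | h2
  · have mem1 : (1 : ↥T) ∈ Ideal.map φ (IsLocalRing.maximalIdeal R) := h1 ▸ trivial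
    have key : ∀ x : ↥T, x ∈ Ideal.map φ (IsLocalRing.maximalIdeal R) →
        ∃ q : Polynomial R, (∀ j, q.coeff j ∈ IsLocalRing.maximalIdeal R) ∧
          (x : S) = Polynomial.aeval s q := by
      intro x hx
      rw [Ideal.map] at hx
      induction hx using Submodule.span_induction with
      | mem x hx =>
          obtain ⟨a, ha, rfl⟩ := hx
          refine ⟨Polynomial.C a, fun j => ?_, ?_⟩
          · rw [Polynomial.coeff_C]
            split
            · exact ha
            · exact Ideal.zero_mem _
          · simp [φ, Polynomial.aeval_C]
            rfl
      | zero => exact ⟨0, by simp, by simp⟩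
      | add x y _ _ hx hy =>
          obtain ⟨q1, hq1, he1⟩ := hx
          obtain ⟨q2, hq2, he2⟩ := hy
          exact ⟨q1 + q2, fun j => by simpa using Ideal.add_mem _ (hq1 j) (hq2 j),
            by push_cast [he1, he2]; simp⟩
      | smul r x _ hx =>
          obtain ⟨q, hq, he⟩ := hx
          have hr : (r : S) ∈ Algebra.adjoin R ({s} : Set S) := r.2
          rw [Algebra.adjoin_singleton_eq_range_aeval] at hr
          obtain ⟨p, hp⟩ := hr
          refine ⟨p * q, fun j => ?_, ?_⟩
          · rw [Polynomial.coeff_mul]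
            exact Ideal.sum_mem _ fun c _ => Ideal.mul_mem_left _ _ (hq c.2)
          · have : ((r • x : ↥T) : S) = (r : S) * (x : S) := rfl
            rw [this, map_mul, ← hp, he]
            rfl
    obtain ⟨q, hq, he⟩ := key 1 mem1
    refine ⟨q.natDegree, fun j => q.coeff j, hq, ?_⟩
    have : ((1 : ↥T) : S) = (1 : S) := rfl
    rw [this] at he
    rw [he, Polynomial.aeval_eq_sum_range]
    apply Finset.sum_congr rfl
    intro j _
    rw [Algebra.smul_def]
    rfl
  · exfalso
    apply hs
    have hsT : s ∈ T := Algebra.subset_adjoin rfl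
    obtain ⟨a, ha⟩ := h2 ⟨s, hsT⟩
    have := congrArg Subtype.val ha
    simp [φ] at this
    rw [← this]
    exact a.2

end Main

section Manis
variable {S : Type u} [CommRing S] (R : Subring S) [IsLocalRing R]

lemma prufer_manis (hR : R.subtype.IsPrufer) (s : S) :
    s ∈ R ∨ ∃ t : R, t ∈ IsLocalRing.maximalIdeal R ∧ (t : S) * s = 1 := by
  by_cases hs : s ∈ R
  · exact Or.inl hs
  right
  have h1ne0 : (1 : S) ≠ 0 := by
    intro h
    exact one_ne_zero (Subtype.ext (by simpa using h) : (1 : ↥R) = 0)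
  obtain ⟨n, c, hc, hrel⟩ := relation_of_not_mem R hR hs
  have hu : IsUnit ((1 : ↥R) - c 0) :=
    IsLocalRing.isUnit_one_sub_self_of_mem_nonunits _ (hc 0)
  obtain ⟨u, hu⟩ := hu
  set d : ℕ → ↥R := fun i => (↑u⁻¹ : ↥R) * c (i + 1) with hd_def
  have hd : ∀ i, d i ∈ IsLocalRing.maximalIdeal R :=
    fun i => Ideal.mul_mem_left _ _ (hc (i + 1))
  have hrel1 : (1 : S) = ∑ i ∈ Finset.range n, (d i : S) * s ^ (i + 1) := by
    have h0 : ((u : ↥R) : S) = ∑ i ∈ Finset.range n, ((c (i + 1)) : S) * s ^ (i + 1) := by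
      rw [hu]
      push_cast
      have hrel' := hrel
      rw [Finset.sum_range_succ'] at hrel'
      simp only [pow_zero, mul_one] at hrel'
      linear_combination hrel'
    have h1 : ((↑u⁻¹ : ↥R) : S) * ((u : ↥R) : S) = 1 := by
      rw [← Subring.coe_mul, ← Units.val_mul]
      simp
    rw [← h1, h0, Finset.mul_sum]
    apply Finset.sum_congr rfl
    intro i _
    simp only [hd_def]
    push_cast
    ring
  set w : S := ∑ i ∈ Finset.range n, (d i : S) * s ^ i with hw_def
  have hsw : s * w = 1 := by
    rw [hw_def, Finset.mul_sum, hrel1]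
    apply Finset.sum_congr rfl
    intro i _
    ring
  by_cases hw : w ∈ R
  · refine ⟨⟨w, hw⟩, ?_, by rw [mul_comm] at hsw; exact hsw⟩
    by_contra hunit
    have hvu : IsUnit (⟨w, hw⟩ : ↥R) := not_not.mp hunit
    obtain ⟨v, hv⟩ := hvu
    apply hs
    have : s = ((↑v⁻¹ : ↥R) : S) := by
      have h2 : ((↑v⁻¹ : ↥R) : S) * w = 1 := by
        have : ((↑v⁻¹ * ↑v : ↥R) : S) = 1 := by
          rw [← Units.val_mul]
          simp
        rw [← this, hv]
        norm_cast
      calc s = s * (((↑v⁻¹ : ↥R) : S) * w) := by rw [h2, mul_one]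
        _ = ((↑v⁻¹ : ↥R) : S) * (s * w) := by ring
        _ = ((↑v⁻¹ : ↥R) : S) := by rw [hsw, mul_one]
    rw [this]
    exact SetLike.coe_mem _
  · exfalso
    obtain ⟨p, e, he, hrel2⟩ := relation_of_not_mem R hR hw
    have hu' : IsUnit ((1 : ↥R) - e 0) :=
      IsLocalRing.isUnit_one_sub_self_of_mem_nonunits _ (he 0)
    obtain ⟨u', hu'⟩ := hu'
    set e' : ℕ → ↥R := fun k => (↑u'⁻¹ : ↥R) * e (k + 1) with he'_def
    have hrel2' : (1 : S) = ∑ k ∈ Finset.range p, (e' k : S) * w ^ (k + 1) := by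
      have h0 : ((u' : ↥R) : S) = ∑ k ∈ Finset.range p, ((e (k + 1)) : S) * w ^ (k + 1) := by
        rw [hu']
        push_cast
        have hrel' := hrel2
        rw [Finset.sum_range_succ'] at hrel'
        simp only [pow_zero, mul_one] at hrel'
        linear_combination hrel'
      have h1 : ((↑u'⁻¹ : ↥R) : S) * ((u' : ↥R) : S) = 1 := by
        rw [← Subring.coe_mul, ← Units.val_mul]; simp
      rw [← h1, h0, Finset.mul_sum]
      apply Finset.sum_congr rfl
      intro k _
      simp only [he'_def]
      push_cast
      ring
    -- the span of powers of s up to p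
    set V : Submodule ↥R S :=
      Submodule.span ↥R ((fun k => s ^ k) '' (Set.Iic p)) with hV_def
    have hVfg : V.FG := by
      apply Submodule.fg_span
      exact Set.Finite.image _ (Set.finite_Iic p)
    have hswk : ∀ a b : ℕ, b ≤ a → s ^ a * w ^ b = s ^ (a - b) := by
      intro a b
      induction b with
      | zero => intro _; simp
      | succ b ih =>
          intro hba
          have hb : b ≤ a := Nat.le_of_succ_le hba
          calc s ^ a * w ^ (b + 1) = (s ^ a * w ^ b) * w := by ring
            _ = s ^ (a - b) * w := by rw [ih hb]
            _ = s ^ (a - (b + 1)) * (s * w) := by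
                have h2 : a - b = (a - (b + 1)) + 1 := by omega
                rw [h2, pow_succ]; ring
            _ = s ^ (a - (b + 1)) := by rw [hsw, mul_one]
    have hpow : ∀ j, s ^ j ∈ V := by
      intro j
      induction j using Nat.strong_induction_on with
      | _ j ih =>
        by_cases hj : j ≤ p
        · exact Submodule.subset_span ⟨j, hj, rfl⟩
        · push_neg at hj
          have : s ^ j = ∑ k ∈ Finset.range p, (e' k : S) * s ^ (j - (k + 1)) := by
            calc s ^ j = s ^ j * 1 := by rw [mul_one]
              _ = ∑ k ∈ Finset.range p, (e' k : S) * (s ^ j * w ^ (k + 1)) := by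
                  rw [hrel2', Finset.mul_sum]; apply Finset.sum_congr rfl; intro k _; ring
              _ = ∑ k ∈ Finset.range p, (e' k : S) * s ^ (j - (k + 1)) := by
                  apply Finset.sum_congr rfl
                  intro k hk
                  rw [hswk j (k + 1) (by simp at hk; omega)]
          rw [this]
          apply Submodule.sum_mem
          intro k hk
          have hmem : s ^ (j - (k + 1)) ∈ V := ih _ (by simp at hk; omega)
          have : (e' k : S) * s ^ (j - (k + 1)) = (e' k) • s ^ (j - (k + 1)) := rfl
          rw [this]
          exact Submodule.smul_mem _ _ hmem
    have hVsub : V ≤ (IsLocalRing.maximalIdeal R) • V := by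
      have main : Submodule.span ↥R ((fun k => s ^ k) '' (Set.Iic p)) ≤
          (IsLocalRing.maximalIdeal R) • V := by
        rw [Submodule.span_le]
        rintro _ ⟨k, -, rfl⟩
        simp only [SetLike.mem_coe]
        show s ^ k ∈ _
        have : s ^ k = ∑ j ∈ Finset.range (n + 1), (c j : S) * s ^ (k + j) := by
          calc s ^ k = s ^ k * 1 := by rw [mul_one]
            _ = ∑ j ∈ Finset.range (n + 1), (c j : S) * s ^ (k + j) := by
                rw [hrel, Finset.mul_sum]; apply Finset.sum_congr rfl; intro j _
                rw [pow_add]; ring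
        rw [this]
        apply Submodule.sum_mem
        intro j _
        have h3 : (c j : S) * s ^ (k + j) = (c j) • s ^ (k + j) := rfl
        rw [h3]
        exact Submodule.smul_mem_smul (hc j) (hpow (k + j))
      rw [hV_def]
      exact main
    have hbot : V = ⊥ := by
      apply Submodule.eq_bot_of_le_smul_of_le_jacobson_bot _ _ hVfg hVsub
      rw [IsLocalRing.jacobson_eq_maximalIdeal ⊥ bot_ne_top]
    have h1V : (1 : S) ∈ V := by
      have := hpow 0
      simpa using this
    rw [hbot] at h1V
    simp at h1V
    exact h1ne0 h1V

end Manis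

section Comp
variable {S : Type u} [CommRing S] (R : Subring S) [IsLocalRing R]

lemma prufer_comparable (hR : R.subtype.IsPrufer) {a b : ↥R} (hb : IsUnit (b : S)) :
    a ∈ Ideal.span ({b} : Set ↥R) ∨
      ∃ t : ↥R, t ∈ IsLocalRing.maximalIdeal R ∧ t * a = b := by
  obtain ⟨β, hβ⟩ := hb
  rcases prufer_manis R hR ((a : S) * ↑β⁻¹) with h | ⟨t, ht, hts⟩
  · left
    rw [Ideal.mem_span_singleton']
    refine ⟨⟨_, h⟩, ?_⟩
    apply Subtype.ext
    show (a : S) * ↑β⁻¹ * (b : S) = (a : S)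
    rw [← hβ]
    calc (a : S) * ↑β⁻¹ * ↑β = (a : S) * (↑β⁻¹ * ↑β) := by ring
      _ = (a : S) := by rw [← Units.val_mul]; simp
  · right
    refine ⟨t, ht, ?_⟩
    apply Subtype.ext
    show (t : S) * (a : S) = (b : S)
    have h2 : (t : S) * ((a : S) * ↑β⁻¹) * ↑β = 1 * ↑β := by rw [hts]
    rw [← hβ]
    have h3 : ((↑β⁻¹ : S)) * ↑β = 1 := by rw [← Units.val_mul]; simp
    calc (t : S) * (a : S) = (t : S) * (a : S) * (↑β⁻¹ * ↑β) := by rw [h3, mul_one]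
      _ = (t : S) * ((a : S) * ↑β⁻¹) * ↑β := by ring
      _ = 1 * ↑β := h2
      _ = ↑β := one_mul _

lemma exists_max_gen (hR : R.subtype.IsPrufer) (t : Finset ↥R) :
    (∀ a ∈ t, IsUnit (a : S)) → t.Nonempty →
      ∃ ρ ∈ t, IsUnit ((ρ : ↥R) : S) ∧ ∀ b ∈ t, b ∈ Ideal.span ({ρ} : Set ↥R) := by
  classical
  induction t using Finset.induction_on with
  | empty => intro _ h; exact absurd h (by simp)
  | @insert a tl ha ih =>
      intro hall _
      by_cases htl : tl.Nonempty
      · obtain ⟨ρ', hρ't, hρ'u, hρ'max⟩ :=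
          ih (fun x hx => hall x (Finset.mem_insert_of_mem hx)) htl
        rcases prufer_comparable R hR (a := a) (b := ρ') hρ'u with h | ⟨x, _, hx⟩
        · refine ⟨ρ', Finset.mem_insert_of_mem hρ't, hρ'u, ?_⟩
          intro b hb
          rcases Finset.mem_insert.mp hb with rfl | hb
          · exact h
          · exact hρ'max b hb
        · refine ⟨a, Finset.mem_insert_self a tl, hall a (Finset.mem_insert_self a tl), ?_⟩
          intro b hb
          rcases Finset.mem_insert.mp hb with rfl | hb
          · exact Ideal.mem_span_singleton_self b
          · have hbρ' := hρ'max b hb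
            rw [Ideal.mem_span_singleton'] at hbρ' ⊢
            obtain ⟨y, hy⟩ := hbρ'
            exact ⟨y * x, by rw [mul_assoc, hx, hy]⟩
      · rw [Finset.not_nonempty_iff_eq_empty] at htl
        subst htl
        refine ⟨a, Finset.mem_insert_self a ∅,
          hall a (Finset.mem_insert_self a ∅), ?_⟩
        intro b hb
        rcases Finset.mem_insert.mp hb with rfl | hb
        · exact Ideal.mem_span_singleton_self b
        · simp at hb

end Comp

/-- Let `R ⊆ S` be a Prüfer extension with `R` local and `I` a finitely
generated ideal of `R`.  Then `I·S = S` iff `I = R·ρ` for some strong divisor `ρ` of `R`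
invertible in `S`. -/
theorem sRegular_iff_principal_strong_divisor {S : Type*} [CommRing S] (R : Subring S)
    [IsLocalRing R] (hR : R.subtype.IsPrufer) (I : Ideal R) (hI : I.FG) :
    Ideal.map R.subtype I = ⊤ ↔
      ∃ ρ : R, IsStrongDivisor ρ ∧ IsUnit (ρ : S) ∧ I = Ideal.span {ρ} := by
  classical
  constructor
  · intro hT
    obtain ⟨t, ht⟩ := hI
    -- Step 1: some generator is invertible in S
    have step1 : ∃ a ∈ t, IsUnit ((a : ↥R) : S) := by
      by_contra hnone
      push_neg at hnone
      have h1 : (1 : S) ∈ Ideal.span ((fun x : ↥R => (x : S)) '' (↑t : Set ↥R)) := by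
        have : Ideal.map R.subtype I = Ideal.span ((fun x : ↥R => (x : S)) '' (↑t : Set ↥R)) := by
          rw [← ht, Ideal.map_span]
          rfl
        rw [← this, hT]
        trivial
      rw [Ideal.span, Submodule.mem_span_set] at h1
      obtain ⟨f, hfsupp, hfsum⟩ := h1
      -- each term lands in (the image of) the maximal ideal
      have key : ∀ y ∈ f.support, ∃ x : ↥R,
          x ∈ IsLocalRing.maximalIdeal R ∧ (x : S) = f y * y := by
        intro y hy
        have hyt := hfsupp hy
        obtain ⟨a, hat, hay⟩ := hyt
        have hnu : ¬IsUnit ((a : ↥R) : S) := hnone a hat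
        subst hay
        set σ := f (a : S) with hσ
        rcases prufer_manis R hR σ with hσR | ⟨t', ht', ht'σ⟩
        · -- σ ∈ R
          have ham : a ∈ IsLocalRing.maximalIdeal R := by
            by_contra hau
            exact hnu (IsUnit.map R.subtype (not_not.mp hau))
          exact ⟨⟨σ, hσR⟩ * a, Ideal.mul_mem_left _ _ ham, rfl⟩
        · -- σ is inverse of t' ∈ m; t' is a unit in S
          have ht'u : IsUnit ((t' : ↥R) : S) := IsUnit.of_mul_eq_one _ ht'σ
          rcases prufer_comparable R hR (a := a) (b := t') ht'u with h | ⟨x, _, hx⟩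
          · rw [Ideal.mem_span_singleton'] at h
            obtain ⟨r, hr⟩ := h
            refine ⟨r, ?_, ?_⟩
            · by_contra hru
              apply hnu
              have : (a : S) = (r : S) * (t' : S) := by rw [← hr]; push_cast; ring
              rw [this]
              exact (IsUnit.map R.subtype (not_not.mp hru)).mul ht'u
            · have hca : (a : S) = (r : S) * (t' : S) := by rw [← hr]; push_cast; ring
              calc (r : S) = (r : S) * ((t' : S) * σ) := by rw [ht'σ, mul_one]
                _ = σ * ((r : S) * (t' : S)) := by ring
                _ = σ * (a : S) := by rw [← hca]
          · exfalso
            apply hnu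
            have : (t' : S) = (x : S) * (a : S) := by rw [← hx]; push_cast; ring
            rw [this] at ht'u
            exact isUnit_of_mul_isUnit_right ht'u
      choose g hgm hgv using key
      have hsum : ((∑ y ∈ f.support.attach, g y y.2 : ↥R) : S) = 1 := by
        push_cast
        rw [← hfsum]
        rw [Finsupp.sum, ← Finset.sum_attach f.support (fun y => f y • y)]
        apply Finset.sum_congr rfl
        intro y _
        rw [hgv y y.2]
        rfl
      have h1m : (1 : ↥R) ∈ IsLocalRing.maximalIdeal R := by
        have : (∑ y ∈ f.support.attach, g y y.2 : ↥R) = 1 := Subtype.ext (by simpa using hsum)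
        rw [← this]
        exact Ideal.sum_mem _ fun y _ => hgm y y.2
      exact (IsLocalRing.maximalIdeal.isMaximal ↥R).ne_top ((Ideal.eq_top_iff_one _).mpr h1m)
    -- Step 2: pick a maximal generator among the S-invertible ones
    obtain ⟨a0, ha0t, ha0u⟩ := step1
    set tu := t.filter (fun a : ↥R => IsUnit (a : S)) with htu
    have htune : tu.Nonempty := ⟨a0, Finset.mem_filter.mpr ⟨ha0t, ha0u⟩⟩
    obtain ⟨ρ, hρtu, hρu, hρmax⟩ := exists_max_gen R hR tu
      (fun a ha => (Finset.mem_filter.mp ha).2) htune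
    have hρt : ρ ∈ t := (Finset.mem_filter.mp hρtu).1
    -- every generator lies in span {ρ}
    have hgen : ∀ b ∈ t, b ∈ Ideal.span ({ρ} : Set ↥R) := by
      intro b hb
      by_cases hbu : IsUnit ((b : ↥R) : S)
      · exact hρmax b (Finset.mem_filter.mpr ⟨hb, hbu⟩)
      · rcases prufer_comparable R hR (a := b) (b := ρ) hρu with h | ⟨x, _, hx⟩
        · exact h
        · exfalso
          apply hbu
          have : (ρ : S) = (x : S) * (b : S) := by rw [← hx]; push_cast; ring
          rw [this] at hρu
          exact isUnit_of_mul_isUnit_right hρu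
    have hIρ : I = Ideal.span ({ρ} : Set ↥R) := by
      apply le_antisymm
      · rw [← ht, Ideal.span_le]
        intro b hb
        exact hgen b hb
      · rw [Ideal.span_le, Set.singleton_subset_iff, ← ht]
        exact Ideal.subset_span hρt
    refine ⟨ρ, ⟨?_, ?_⟩, hρu, hIρ⟩
    · -- non-zero-divisor
      rw [mem_nonZeroDivisors_iff_right]
      intro x hx
      have hx' : (x : S) * (ρ : S) = 0 := by
        have := congrArg (fun z : ↥R => (z : S)) hx
        push_cast at this
        simpa using this
      have hx0 : (x : S) = 0 := by
        obtain ⟨v, hv⟩ := hρu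
        have hvv : (ρ : S) * ↑v⁻¹ = 1 := by rw [← hv, ← Units.val_mul]; simp
        calc (x : S) = (x : S) * ((ρ : S) * ↑v⁻¹) := by rw [hvv, mul_one]
          _ = ((x : S) * (ρ : S)) * ↑v⁻¹ := by ring
          _ = 0 := by rw [hx', zero_mul]
      exact Subtype.ext hx0
    · -- comparability with every ideal
      intro K
      by_cases hK : K ≤ Ideal.span ({ρ} : Set ↥R)
      · exact Or.inl hK
      · right
        obtain ⟨b, hbK, hbρ⟩ := SetLike.not_le_iff_exists.mp hK
        rcases prufer_comparable R hR (a := b) (b := ρ) hρu with h | ⟨x, _, hx⟩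
        · exact absurd h hbρ
        · rw [Ideal.span_le, Set.singleton_subset_iff]
          rw [← hx]
          exact Ideal.mul_mem_left _ _ hbK
  · rintro ⟨ρ, _, hunit, rfl⟩
    rw [Ideal.map_span, Set.image_singleton]
    exact Ideal.span_singleton_eq_top.mpr hunit
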